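/- arXiv:2603.14510 — 2 statements merged into one kernel-verified Lean document; each statement's English description precedes it below -/
import Mathlib

section
/- Let h ≥ 1 and let X be an additive commutative semigroup such that every element of X has only finitely many representations as an ordered sum of h elements of X. If (A_q) is a decreasing sequence of subsets of X with intersection A, then hA equals the intersection over q of hA_q. -/
open Pointwise

/-- The `h`-fold sumset: all sums of `h` not necessarily distinct elements of `S`
(for `h ≥ 1`; by convention `hfold 0 S = S`). -/
def hfold {α : Type*} [Add α] : ℕ → Set α → Set α
  | 0, S => S
  | 1, S => S
  | n + 2, S => hfold (n + 1) S + S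

/-- The sum of an ordered `(n+1)`-tuple in an additive semigroup. -/
def tupSum {α : Type*} [Add α] : (n : ℕ) → (Fin (n + 1) → α) → α
  | 0, f => f 0
  | n + 1, f => tupSum n (fun i => f i.castSucc) + f (Fin.last (n + 1))

lemma mem_hfold {α : Type*} [Add α] (k : ℕ) (S : Set α) (x : α) :
    x ∈ hfold (k + 1) S ↔ ∃ f : Fin (k + 1) → α, (∀ i, f i ∈ S) ∧ tupSum k f = x := by
  induction k generalizing x with
  | zero =>
    simp only [hfold, tupSum]
    constructor
    · intro hx; exact ⟨fun _ => x, fun _ => hx, rfl⟩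
    · rintro ⟨f, hf, rfl⟩; exact hf 0
  | succ n ih =>
    show x ∈ hfold (n + 1) S + S ↔ _
    constructor
    · rintro ⟨a, ha, b, hb, rfl⟩
      obtain ⟨f, hf, rfl⟩ := (ih a).mp ha
      refine ⟨Fin.snoc f b, ?_, ?_⟩
      · intro i
        refine Fin.lastCases ?_ ?_ i
        · simpa [Fin.snoc_last] using hb
        · intro j; simpa [Fin.snoc_castSucc] using hf j
      · show tupSum (n + 1) _ = _
        simp [tupSum, Fin.snoc_castSucc, Fin.snoc_last]
    · rintro ⟨f, hf, rfl⟩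
      show tupSum (n + 1) f ∈ _
      refine ⟨tupSum n (fun i => f i.castSucc), ?_, f (Fin.last (n + 1)), hf _, rfl⟩
      exact (ih _).mpr ⟨fun i => f i.castSucc, fun i => hf _, rfl⟩

theorem stmt3 {X : Type*} [AddCommSemigroup X] (k : ℕ)
    (hrep : ∀ x : X, {f : Fin (k + 1) → X | tupSum k f = x}.Finite)
    (A : Set X) (Aq : ℕ → Set X)
    (hdec : ∀ q, Aq (q + 1) ⊆ Aq q)
    (hA : A = ⋂ q, Aq q) :
    hfold (k + 1) A = ⋂ q, hfold (k + 1) (Aq q) := by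
  have hanti : ∀ {q r : ℕ}, q ≤ r → Aq r ⊆ Aq q := by
    intro q r hqr
    induction hqr with
    | refl => exact subset_rfl
    | step h ih => exact (hdec _).trans ih
  apply Set.Subset.antisymm
  · intro x hx
    rw [mem_hfold] at hx
    obtain ⟨f, hf, rfl⟩ := hx
    refine Set.mem_iInter.mpr fun q => (mem_hfold _ _ _).mpr ⟨f, fun i => ?_, rfl⟩
    have := hf i
    rw [hA] at this
    exact Set.mem_iInter.mp this q
  · intro x hx
    rw [Set.mem_iInter] at hx
    -- choose a tuple for each q
    have hch : ∀ q, ∃ f : Fin (k + 1) → X, (∀ i, f i ∈ Aq q) ∧ tupSum k f = x := by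
      intro q; exact (mem_hfold _ _ _).mp (hx q)
    choose F hF1 hF2 using hch
    -- F takes values in the finite set {f | tupSum k f = x}
    have hfin : (Set.range F).Finite :=
      (hrep x).subset (by rintro _ ⟨q, rfl⟩; exact hF2 q)
    -- some value occurs for arbitrarily large q
    have : ∃ f ∈ Set.range F, {q | F q = f}.Infinite := by
      by_contra hcon
      push_neg at hcon
      have : (Set.univ : Set ℕ).Finite := by
        have : (Set.univ : Set ℕ) ⊆ ⋃ f ∈ Set.range F, {q | F q = f} := by
          intro q _
          exact Set.mem_biUnion ⟨q, rfl⟩ rfl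
        refine Set.Finite.subset ?_ this
        exact Set.Finite.biUnion hfin fun f hf =>
          hcon f hf
      exact Set.infinite_univ this
    obtain ⟨f, -, hinf⟩ := this
    have hfAll : ∀ q, ∀ i, f i ∈ Aq q := by
      intro q i
      obtain ⟨r, hr, hrq⟩ := hinf.exists_gt q
      have : f i ∈ Aq r := hr ▸ hF1 r i
      exact hanti hrq.le this
    have hsum : tupSum k f = x := by
      obtain ⟨r, hr, -⟩ := hinf.exists_gt 0
      exact hr ▸ hF2 r
    refine (mem_hfold _ _ _).mpr ⟨f, fun i => ?_, hsum⟩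
    rw [hA]; exact Set.mem_iInter.mpr fun q => hfAll q i
end

section
/- For every integer h₀ ≥ 3, there exists a strictly decreasing sequence (A_q) of sets of integers with intersection A such that the set of h ≥ 1 for which hA equals the intersection over q of hA_q is exactly {1} ∪ {h : h ≥ h₀}. -/
open Pointwise

lemma hfold_succ {α : Type*} [Add α] (n : ℕ) (hn : 1 ≤ n) (S : Set α) :
    hfold (n + 1) S = hfold n S + S := by
  match n, hn with
  | (k + 1), _ => rfl

lemma hfold_mono {α : Type*} [Add α] (n : ℕ) {S T : Set α} (h : S ⊆ T) :
    hfold n S ⊆ hfold n T := by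
  induction n with
  | zero => exact h
  | succ k ih =>
    match k with
    | 0 => exact h
    | k' + 1 =>
      show hfold (k' + 1) S + S ⊆ hfold (k' + 1) T + T
      exact Set.add_subset_add ih h

section
variable (m : ℤ)

def Aset : Set ℤ := {x | ∃ k : ℕ, k ≤ 1 ∧ m ∣ x - (k : ℤ)}

def Bq (q : ℕ) : Set ℤ := {x | ∃ j : ℕ, q ≤ j ∧ x = 2 + (j : ℤ) * m}

def AqS (q : ℕ) : Set ℤ := Aset m ∪ Bq m q

lemma Achar (h : ℕ) (hh : 1 ≤ h) :
    hfold h (Aset m) = {x | ∃ k : ℕ, k ≤ h ∧ m ∣ x - (k : ℤ)} := by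
  induction h, hh using Nat.le_induction with
  | base => rfl
  | succ n hn ih =>
    rw [hfold_succ n hn, ih]
    ext x
    constructor
    · rintro ⟨y, ⟨k₁, hk₁, d₁⟩, a, ⟨k₂, hk₂, d₂⟩, rfl⟩
      refine ⟨k₁ + k₂, by omega, ?_⟩
      push_cast
      have := dvd_add d₁ d₂
      convert this using 1
      exacts [rfl, by ring]
    · rintro ⟨k, hk, d⟩
      rcases Nat.lt_or_ge k (n + 1) with hlt | hge
      · exact ⟨x, ⟨k, by omega, d⟩, 0, ⟨0, by norm_num⟩, add_zero x⟩
      · have hk' : k = n + 1 := by omega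
        subst hk'
        refine ⟨x - 1, ⟨n, le_refl n, ?_⟩, 1, ⟨1, le_refl 1, by simp⟩, by ring⟩
        have : x - 1 - (n : ℤ) = x - ((n + 1 : ℕ) : ℤ) := by push_cast; ring
        rw [this]
        exact d

variable (hm : 4 ≤ m)
include hm

lemma inter_AqS : (⋂ q, AqS m q) = Aset m := by
  ext x
  simp only [Set.mem_iInter]
  constructor
  · intro hx
    by_cases hA : x ∈ Aset m
    · exact hA
    · rcases hx 0 with h0 | ⟨j0, _, rfl⟩
      · exact absurd h0 hA
      · rcases hx (j0 + 1) with h1 | ⟨j1, hj1, heq⟩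
        · exact absurd h1 hA
        · exfalso
          have : (j0 : ℤ) * m = (j1 : ℤ) * m := by linarith [heq]
          have hmne : m ≠ 0 := by omega
          have := mul_right_cancel₀ hmne this
          have : j0 = j1 := by exact_mod_cast this
          omega
  · intro hA q
    exact Or.inl hA

lemma not_mem_Aq_succ (q : ℕ) : (2 + (q : ℤ) * m) ∉ AqS m (q + 1) := by
  rintro (⟨k, hk, d⟩ | ⟨j, hj, heq⟩)
  · have d2 : m ∣ 2 - (k : ℤ) := by
      have : 2 + (q : ℤ) * m - k - (q : ℤ) * m = 2 - k := by ring
      rw [← this]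
      exact dvd_sub d (dvd_mul_left m _)
    have hpos : 0 < 2 - (k : ℤ) := by omega
    have := Int.le_of_dvd hpos d2
    omega
  · have : (q : ℤ) * m = (j : ℤ) * m := by linarith [heq]
    have hmne : m ≠ 0 := by omega
    have := mul_right_cancel₀ hmne this
    have : q = j := by exact_mod_cast this
    omega

lemma strict_AqS (q : ℕ) : AqS m (q + 1) ⊂ AqS m q := by
  constructor
  · apply Set.union_subset_union_right
    rintro x ⟨j, hj, rfl⟩
    exact ⟨j, by omega, rfl⟩
  · intro hsub
    exact not_mem_Aq_succ m hm q (hsub (Or.inr ⟨q, le_refl q, rfl⟩))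

lemma witness_mem (h : ℕ) (hh : 2 ≤ h) (q : ℕ) :
    ((h : ℤ) + 1) ∈ hfold h (AqS m q) := by
  induction h, hh using Nat.le_induction with
  | base =>
    show ((2 : ℕ) : ℤ) + 1 ∈ hfold 1 (AqS m q) + AqS m q
    refine ⟨1 - (q : ℤ) * m, Or.inl ⟨1, le_refl 1, ?_⟩, 2 + (q : ℤ) * m,
      Or.inr ⟨q, le_refl q, rfl⟩, by push_cast; ring⟩
    have : 1 - (q : ℤ) * m - (1 : ℕ) = -((q : ℤ) * m) := by push_cast; ring
    rw [this]
    exact (dvd_mul_left m (q:ℤ)).neg_right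
  | succ n hn ih =>
    rw [hfold_succ n (by omega)]
    have h1 : (1 : ℤ) ∈ AqS m q := Or.inl ⟨1, le_refl 1, by simp⟩
    have e : ((n + 1 : ℕ) : ℤ) + 1 = ((n : ℤ) + 1) + 1 := by push_cast; ring
    rw [e]
    exact Set.add_mem_add ih h1

lemma witness_not_mem (h : ℕ) (hh : 2 ≤ h) (hlt : (h : ℤ) + 1 < m) :
    ((h : ℤ) + 1) ∉ hfold h (Aset m) := by
  rw [Achar m h (by omega)]
  rintro ⟨k, hk, d⟩
  rcases lt_or_ge (k : ℤ) ((h : ℤ) + 1) with hl | hl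
  · have hpos : 0 < (h : ℤ) + 1 - k := by omega
    have := Int.le_of_dvd hpos d
    have : (k : ℤ) ≤ (h : ℤ) := by exact_mod_cast hk
    omega
  · have : (k : ℤ) ≤ (h : ℤ) := by exact_mod_cast hk
    omega

lemma hfold_univ (h : ℕ) (hh : m - 1 ≤ (h : ℤ)) : hfold h (Aset m) = Set.univ := by
  have h1 : 1 ≤ h := by omega
  rw [Achar m h h1]
  ext x
  simp only [Set.mem_univ, iff_true, Set.mem_setOf_eq]
  have hm0 : 0 < m := by omega
  have hr0 : 0 ≤ x % m := Int.emod_nonneg x (by omega)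
  have hrlt : x % m < m := Int.emod_lt_of_pos x hm0
  refine ⟨(x % m).toNat, ?_, ?_⟩
  · have : ((x % m).toNat : ℤ) = x % m := Int.toNat_of_nonneg hr0
    omega
  · rw [Int.toNat_of_nonneg hr0]
    have := Int.mul_ediv_add_emod x m
    exact ⟨x / m, by linarith⟩

end

theorem stmt10 (h₀ : ℕ) (hh₀ : 3 ≤ h₀) :
    ∃ Aq : ℕ → Set ℤ,
      (∀ q, Aq (q + 1) ⊂ Aq q) ∧
      (∀ h : ℕ, 1 ≤ h →
        (hfold h (⋂ q, Aq q) = ⋂ q, hfold h (Aq q) ↔ h = 1 ∨ h₀ ≤ h)) := by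
  set m : ℤ := (h₀ : ℤ) + 1 with hm_def
  have hm : 4 ≤ m := by omega
  refine ⟨AqS m, strict_AqS m hm, ?_⟩
  intro h hh
  rw [inter_AqS m hm]
  constructor
  · intro heq
    by_contra hcon
    push_neg at hcon
    obtain ⟨hne1, hlt⟩ := hcon
    have h2 : 2 ≤ h := by omega
    have hw : ((h : ℤ) + 1) ∈ ⋂ q, hfold h (AqS m q) := by
      simp only [Set.mem_iInter]
      exact witness_mem m hm h h2
    rw [← heq] at hw
    exact witness_not_mem m hm h h2 (by omega) hw
  · rintro (rfl | hge)
    · simp only [hfold]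
      rw [inter_AqS m hm]
    · have huniv : hfold h (Aset m) = Set.univ := hfold_univ m hm h (by omega)
      rw [huniv]
      refine (Set.iInter_eq_univ.mpr fun q => Set.eq_univ_of_univ_subset ?_).symm
      rw [← huniv]
      exact hfold_mono h Set.subset_union_left
end
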